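/- Let J ∈ ℕ, J ≥ 1, T > 0, γ ≥ 0, and 0 < m₀ ≤ m₁. Let M : [0, T] → ℝ^{J×J} be continuously differentiable with M(t) symmetric and m₀ ‖x‖² ≤ xᵀ M(t) x ≤ m₁ ‖x‖² for all x ∈ ℝ^J and t ∈ [0, T], and with |xᵀ M′(t) x| ≤ 2γ · xᵀ M(t) x for all x ∈ ℝ^J and t ∈ [0, T]. Let (Ω, F, P) be a probability space, and for each ω ∈ Ω let S(ω) : [0, T] → ℝ^{J×J} be continuous with S(ω)(t) symmetric positive semidefinite for all t, and let U(ω) : [0, T] → ℝ^J be continuously differentiable with (d/dt)(M(t)U(ω)(t)) + S(ω)(t)U(ω)(t) = 0 on [0, T]. Assume ω ↦ sup_{t∈[0,T]} ‖U(ω)(t)‖² is measurable and ω ↦ U(ω)(0) belongs to L²(Ω; ℝ^J). Then ∫_Ω sup_{t∈[0,T]} ‖U(ω)(t)‖² dP(ω) ≤ (m₁/m₀) · e^{2γT} · ∫_Ω ‖U(ω)(0)‖² dP(ω). -/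

import Mathlib

open MeasureTheory
open scoped Matrix

/-- Mean-square stability bound for the semi-discrete random evolving surface finite
element solution: with a deterministic `C¹` symmetric mass matrix `M(t)` satisfying
`m₀‖x‖² ≤ xᵀM(t)x ≤ m₁‖x‖²` and `|xᵀM′(t)x| ≤ 2γ xᵀM(t)x`, and for each sample `ω` a
continuous symmetric positive semidefinite stiffness matrix `S(ω,t)` and a `C¹` solution
`U(ω)` of `(d/dt)(M(t)U(ω)(t)) + S(ω,t)U(ω)(t) = 0`, one has
`∫_Ω sup_{t∈[0,T]} ‖U(ω)(t)‖² dP ≤ (m₁/m₀) e^{2γT} ∫_Ω ‖U(ω)(0)‖² dP`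
(`‖x‖² = x ⬝ᵥ x` is the squared Euclidean norm). -/
theorem random_linear_system_mean_square_stability
    (J : ℕ) (hJ : 1 ≤ J) (T : ℝ) (hT : 0 < T) (γ : ℝ) (hγ : 0 ≤ γ)
    (m₀ m₁ : ℝ) (hm₀ : 0 < m₀) (hm₀₁ : m₀ ≤ m₁)
    (M M' : ℝ → Matrix (Fin J) (Fin J) ℝ)
    (hMderiv : ∀ t ∈ Set.Icc (0 : ℝ) T, ∀ i j,
      HasDerivWithinAt (fun s => M s i j) (M' t i j) (Set.Icc 0 T) t)
    (hM'cont : ∀ i j, ContinuousOn (fun t => M' t i j) (Set.Icc 0 T))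
    (hMsymm : ∀ t ∈ Set.Icc (0 : ℝ) T, (M t).IsSymm)
    (hMbounds : ∀ t ∈ Set.Icc (0 : ℝ) T, ∀ x : Fin J → ℝ,
      m₀ * (x ⬝ᵥ x) ≤ x ⬝ᵥ (M t).mulVec x ∧ x ⬝ᵥ (M t).mulVec x ≤ m₁ * (x ⬝ᵥ x))
    (hM'bound : ∀ t ∈ Set.Icc (0 : ℝ) T, ∀ x : Fin J → ℝ,
      abs (x ⬝ᵥ (M' t).mulVec x) ≤ 2 * γ * (x ⬝ᵥ (M t).mulVec x))
    {Ω : Type*} [MeasurableSpace Ω] (P : Measure Ω) [IsProbabilityMeasure P]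
    (S : Ω → ℝ → Matrix (Fin J) (Fin J) ℝ)
    (hScont : ∀ ω : Ω, ∀ i j, ContinuousOn (fun t => S ω t i j) (Set.Icc 0 T))
    (hSpsd : ∀ ω : Ω, ∀ t ∈ Set.Icc (0 : ℝ) T, (S ω t).PosSemidef)
    (U : Ω → ℝ → Fin J → ℝ)
    (hUC1 : ∀ ω, ContDiffOn ℝ 1 (U ω) (Set.Icc 0 T))
    (hODE : ∀ ω : Ω, ∀ t ∈ Set.Icc (0 : ℝ) T,
      HasDerivWithinAt (fun s => (M s).mulVec (U ω s))
        (-(S ω t).mulVec (U ω t)) (Set.Icc 0 T) t)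
    (hmeas : Measurable fun ω => ⨆ t : Set.Icc (0 : ℝ) T, U ω t ⬝ᵥ U ω t)
    (hL2 : Integrable (fun ω => U ω 0 ⬝ᵥ U ω 0) P) :
    ∫ ω, (⨆ t : Set.Icc (0 : ℝ) T, U ω t ⬝ᵥ U ω t) ∂P
      ≤ (m₁ / m₀) * Real.exp (2 * γ * T) * ∫ ω, U ω 0 ⬝ᵥ U ω 0 ∂P := by  classical
  have hT0 : (0:ℝ) ∈ Set.Icc (0:ℝ) T := ⟨le_rfl, hT.le⟩
  haveI : Nonempty (Set.Icc (0:ℝ) T) := ⟨⟨0, hT0⟩⟩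
  set c : ℝ := (m₁ / m₀) * Real.exp (2 * γ * T) with hc
  have hdot_nonneg : ∀ (x : Fin J → ℝ), 0 ≤ x ⬝ᵥ x := fun x =>
    Finset.sum_nonneg fun i _ => mul_self_nonneg _
  have hsymm_dot : ∀ t ∈ Set.Icc (0:ℝ) T, ∀ x y : Fin J → ℝ,
      x ⬝ᵥ (M t).mulVec y = y ⬝ᵥ (M t).mulVec x := by
    intro t ht x y
    rw [Matrix.dotProduct_mulVec, ← Matrix.mulVec_transpose, (hMsymm t ht).eq,
      dotProduct_comm]
  -- pathwise bound
  have key : ∀ ω, ∀ t ∈ Set.Icc (0:ℝ) T, U ω t ⬝ᵥ U ω t ≤ c * (U ω 0 ⬝ᵥ U ω 0) := by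
    intro ω
    set U' : ℝ → Fin J → ℝ := fun t => derivWithin (U ω) (Set.Icc 0 T) t with hU'def
    have hUdiff : ∀ t ∈ Set.Icc (0:ℝ) T, HasDerivWithinAt (U ω) (U' t) (Set.Icc 0 T) t :=
      fun t ht => ((hUC1 ω).differentiableOn one_ne_zero t ht).hasDerivWithinAt
    have hMU : ∀ t ∈ Set.Icc (0:ℝ) T,
        HasDerivWithinAt (fun s => (M s).mulVec (U ω s))
          ((M' t).mulVec (U ω t) + (M t).mulVec (U' t)) (Set.Icc 0 T) t := by
      intro t ht
      rw [hasDerivWithinAt_pi]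
      intro i
      simp only [Matrix.mulVec, dotProduct, Pi.add_apply]
      rw [← Finset.sum_add_distrib]
      exact HasDerivWithinAt.fun_sum fun j _ =>
        (hMderiv t ht i j).mul (hasDerivWithinAt_pi.1 (hUdiff t ht) j)
    have hMV : ∀ t ∈ Set.Icc (0:ℝ) T,
        (M t).mulVec (U' t) = -(S ω t).mulVec (U ω t) - (M' t).mulVec (U ω t) := by
      intro t ht
      have hu : UniqueDiffWithinAt ℝ (Set.Icc (0:ℝ) T) t := (uniqueDiffOn_Icc hT) t ht
      have h1 := (hMU t ht).derivWithin hu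
      have h2 := (hODE ω t ht).derivWithin hu
      rw [h2] at h1
      rw [h1]; abel
    set E : ℝ → ℝ := fun s => U ω s ⬝ᵥ (M s).mulVec (U ω s) with hEdef
    set E' : ℝ → ℝ := fun t =>
      U' t ⬝ᵥ (M t).mulVec (U ω t) + U ω t ⬝ᵥ (-(S ω t).mulVec (U ω t)) with hE'def
    have hE : ∀ t ∈ Set.Icc (0:ℝ) T, HasDerivWithinAt E (E' t) (Set.Icc 0 T) t := by
      intro t ht
      have : HasDerivWithinAt (fun s => U ω s ⬝ᵥ (M s).mulVec (U ω s))
          (∑ j, (U' t j * ((M t).mulVec (U ω t)) j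
            + U ω t j * (-(S ω t).mulVec (U ω t)) j)) (Set.Icc 0 T) t := by
        simp only [dotProduct]
        exact HasDerivWithinAt.fun_sum fun j _ =>
          (hasDerivWithinAt_pi.1 (hUdiff t ht) j).mul
            (hasDerivWithinAt_pi.1 (hODE ω t ht) j)
      convert this using 1
      simp only [hE'def, dotProduct, Finset.sum_add_distrib]
    have hEcont : ContinuousOn E (Set.Icc (0:ℝ) T) :=
      fun t ht => (hE t ht).continuousWithinAt
    have hbound : ∀ x ∈ Set.Ico (0:ℝ) T, E' x ≤ 2 * γ * E x + 0 := by
      intro x hx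
      have hx' : x ∈ Set.Icc (0:ℝ) T := ⟨hx.1, hx.2.le⟩
      have h1 : U' x ⬝ᵥ (M x).mulVec (U ω x) = U ω x ⬝ᵥ (M x).mulVec (U' x) :=
        hsymm_dot x hx' _ _
      have h2 : U ω x ⬝ᵥ (M x).mulVec (U' x)
          = -(U ω x ⬝ᵥ (S ω x).mulVec (U ω x)) - U ω x ⬝ᵥ (M' x).mulVec (U ω x) := by
        rw [hMV x hx']
        simp [dotProduct_sub, dotProduct_neg]
      have hS : 0 ≤ U ω x ⬝ᵥ (S ω x).mulVec (U ω x) := by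
        have := (Matrix.posSemidef_iff_dotProduct_mulVec.mp (hSpsd ω x hx')).2 (U ω x)
        simpa using this
      have hM' : -(U ω x ⬝ᵥ (M' x).mulVec (U ω x)) ≤ 2 * γ * E x := by
        have := hM'bound x hx' (U ω x)
        have habs := neg_le_of_abs_le this
        linarith
      have hE'eq : E' x = -(U ω x ⬝ᵥ (S ω x).mulVec (U ω x))
          - U ω x ⬝ᵥ (M' x).mulVec (U ω x) - U ω x ⬝ᵥ (S ω x).mulVec (U ω x) := by
        simp only [hE'def, h1, h2, dotProduct_neg]
        ring
      rw [hE'eq]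
      linarith
    have hright : ∀ x ∈ Set.Ico (0:ℝ) T, HasDerivWithinAt E (E' x) (Set.Ici x) x :=
      fun x hx => (hE x ⟨hx.1, hx.2.le⟩).mono_of_mem_nhdsWithin (Icc_mem_nhdsGE_of_mem hx)
    have hgron := le_gronwallBound_of_liminf_deriv_right_le hEcont
      (fun x hx r hr => (hright x hx).liminf_right_slope_le hr)
      (le_refl (E 0)) hbound
    intro t ht
    have hEt := hgron t ht
    rw [sub_zero, gronwallBound_ε0] at hEt
    have hlow : m₀ * (U ω t ⬝ᵥ U ω t) ≤ E t := (hMbounds t ht (U ω t)).1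
    have hhigh : E 0 ≤ m₁ * (U ω 0 ⬝ᵥ U ω 0) := (hMbounds 0 hT0 (U ω 0)).2
    have hE0 : 0 ≤ E 0 :=
      le_trans (mul_nonneg hm₀.le (hdot_nonneg _)) ((hMbounds 0 hT0 (U ω 0)).1)
    have hexp : Real.exp (2 * γ * t) ≤ Real.exp (2 * γ * T) :=
      Real.exp_le_exp.2 (by nlinarith [ht.2])
    have hchain : m₀ * (U ω t ⬝ᵥ U ω t) ≤ m₁ * (U ω 0 ⬝ᵥ U ω 0) * Real.exp (2 * γ * T) := by
      calc m₀ * (U ω t ⬝ᵥ U ω t) ≤ E t := hlow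
        _ ≤ E 0 * Real.exp (2 * γ * t) := hEt
        _ ≤ E 0 * Real.exp (2 * γ * T) := by
            exact mul_le_mul_of_nonneg_left hexp hE0
        _ ≤ m₁ * (U ω 0 ⬝ᵥ U ω 0) * Real.exp (2 * γ * T) :=
            mul_le_mul_of_nonneg_right hhigh (Real.exp_pos _).le
    rw [hc]
    rw [div_mul_eq_mul_div, div_mul_eq_mul_div, le_div_iff₀ hm₀]
    nlinarith [hchain]
  -- integrate
  have hbdd : ∀ ω, BddAbove (Set.range fun t : Set.Icc (0:ℝ) T => U ω t ⬝ᵥ U ω t) := by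
    intro ω
    exact ⟨c * (U ω 0 ⬝ᵥ U ω 0), by rintro _ ⟨t, rfl⟩; exact key ω t t.2⟩
  have hsup_le : ∀ ω, (⨆ t : Set.Icc (0:ℝ) T, U ω t ⬝ᵥ U ω t) ≤ c * (U ω 0 ⬝ᵥ U ω 0) :=
    fun ω => ciSup_le fun t => key ω t t.2
  have hsup_nonneg : ∀ ω, 0 ≤ (⨆ t : Set.Icc (0:ℝ) T, U ω t ⬝ᵥ U ω t) := fun ω =>
    le_trans (hdot_nonneg (U ω 0)) (le_ciSup (hbdd ω) (⟨0, hT0⟩ : Set.Icc (0:ℝ) T))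
  have hg : Integrable (fun ω => c * (U ω 0 ⬝ᵥ U ω 0)) P := hL2.const_mul c
  have hf : Integrable (fun ω => ⨆ t : Set.Icc (0:ℝ) T, U ω t ⬝ᵥ U ω t) P := by
    refine hg.mono' hmeas.aestronglyMeasurable (Filter.Eventually.of_forall fun ω => ?_)
    rw [Real.norm_eq_abs, abs_of_nonneg (hsup_nonneg ω)]
    exact hsup_le ω
  calc ∫ ω, (⨆ t : Set.Icc (0:ℝ) T, U ω t ⬝ᵥ U ω t) ∂P
      ≤ ∫ ω, c * (U ω 0 ⬝ᵥ U ω 0) ∂P :=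
        integral_mono hf hg hsup_le
    _ = c * ∫ ω, U ω 0 ⬝ᵥ U ω 0 ∂P := integral_const_mul c _
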